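/- The function φ from infinite binary sequences to [0,∞] defined by φ(0ξ) = 1/(1 + 1/φ(ξ)) and φ(1ξ) = 1 + φ(ξ) satisfies φ(y(ξ)) = 2·φ(ξ) for every infinite binary sequence ξ, where y is defined recursively by y(00η) = 0·y(η), y(01η) = 10·y⁻¹(η), y(1η) = 11·y(η) (and y⁻¹ is defined by y⁻¹(0η) = 00·y⁻¹(η), y⁻¹(10η) = 01·y(η), y⁻¹(11η) = 1·y⁻¹(η)). -/

import Mathlib

namespace PD

noncomputable def g : List Bool → ENNReal → ENNReal
  | [], x => x
  | (false :: w), x => (1 + (g w x)⁻¹)⁻¹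
  | (true :: w), x => 1 + g w x

lemma g_mono (w : List Bool) : Monotone (g w) := by
  induction w with
  | nil => exact monotone_id
  | cons b w ih =>
    cases b with
    | false =>
      intro x y h
      simp only [g]
      exact ENNReal.inv_le_inv.mpr (add_le_add_right (ENNReal.inv_le_inv.mpr (ih h)) 1)
    | true =>
      intro x y h
      simpa only [g] using add_le_add_right (ih h) 1

def T : Bool → Matrix (Fin 2) (Fin 2) ℕ := fun b => if b then !![1,1;0,1] else !![1,0;1,1]

def M (w : List Bool) : Matrix (Fin 2) (Fin 2) ℕ := (w.map T).prod

lemma M_nil : M [] = 1 := rfl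

lemma M_cons (b : Bool) (w : List Bool) : M (b :: w) = T b * M w := by
  simp [M, List.map_cons, List.prod_cons]

lemma M_append (u v : List Bool) : M (u ++ v) = M u * M v := by
  simp [M, List.map_append, List.prod_append]

lemma M_false (w : List Bool) : M (false :: w) =
    !![M w 0 0, M w 0 1; M w 0 0 + M w 1 0, M w 0 1 + M w 1 1] := by
  rw [M_cons]
  show (!![1,0;1,1] : Matrix (Fin 2) (Fin 2) ℕ) * M w = _
  ext i j
  fin_cases i <;> fin_cases j <;>
    simp [Matrix.mul_apply, Fin.sum_univ_two]

lemma M_true (w : List Bool) : M (true :: w) =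
    !![M w 0 0 + M w 1 0, M w 0 1 + M w 1 1; M w 1 0, M w 1 1] := by
  rw [M_cons]
  show (!![1,1;0,1] : Matrix (Fin 2) (Fin 2) ℕ) * M w = _
  ext i j
  fin_cases i <;> fin_cases j <;>
    simp [Matrix.mul_apply, Fin.sum_univ_two]

lemma M_det (w : List Bool) : M w 0 0 * M w 1 1 = M w 0 1 * M w 1 0 + 1 := by
  induction w with
  | nil => simp [M_nil]
  | cons b w ih =>
    cases b
    · rw [M_false]; simp [Matrix.cons_val_zero, Matrix.cons_val_one]; nlinarith [ih]
    · rw [M_true]; simp [Matrix.cons_val_zero, Matrix.cons_val_one]; nlinarith [ih]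

lemma Ma_pos (w : List Bool) : 0 < M w 0 0 := by
  nlinarith [M_det w]

lemma Md_pos (w : List Bool) : 0 < M w 1 1 := by
  nlinarith [M_det w]

end PD

namespace PD2
open PD

lemma one_add_div (p q : ENNReal) (hq : q ≠ ⊤) (h : q ≠ 0 ∨ p ≠ 0) :
    1 + p / q = (q + p) / q := by
  rcases eq_or_ne q 0 with rfl | hq0
  · have hp : p ≠ 0 := h.resolve_left (by simp)
    rw [ENNReal.div_zero hp, zero_add, ENNReal.div_zero hp]
    simp
  · rw [← ENNReal.div_self hq0 hq, ENNReal.div_add_div_same]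

lemma id1 (t : ENNReal) : 2 * (1 + ((1 + t⁻¹)⁻¹)⁻¹)⁻¹ = (1 + (2 * t)⁻¹)⁻¹ := by
  rw [inv_inv, show (1 : ENNReal) + (1 + t⁻¹) = 2 + t⁻¹ by ring,
    ENNReal.mul_inv (Or.inl two_ne_zero) (Or.inl ENNReal.ofNat_ne_top),
    show (1 : ENNReal) + 2⁻¹ * t⁻¹ = 2⁻¹ * (2 + t⁻¹) by
      rw [mul_add, ENNReal.inv_mul_cancel two_ne_zero ENNReal.ofNat_ne_top],
    ENNReal.mul_inv (Or.inl (by simp)) (Or.inl (by simp)), inv_inv]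

lemma id4 (t : ENNReal) : (1 + (1 + t⁻¹)⁻¹) / 2 = (1 + (1 + 2 * t)⁻¹)⁻¹ := by
  rcases eq_or_ne t 0 with rfl | h0
  · norm_num
  rcases eq_or_ne t ⊤ with rfl | ht
  · norm_num [ENNReal.div_self two_ne_zero ENNReal.ofNat_ne_top]
  have h2t : (1 : ENNReal) + 2 * t ≠ ⊤ := by
    simp [ENNReal.add_ne_top, ENNReal.mul_ne_top, ht]
  have h1t : t + 1 ≠ ⊤ := by simp [ENNReal.add_ne_top, ht]
  have e1 : (1 : ENNReal) + t⁻¹ = (t + 1) / t := by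
    rw [← one_div, one_add_div 1 t ht (Or.inl h0)]
  have e2 : ((t + 1) / t)⁻¹ = t / (t + 1) :=
    ENNReal.inv_div (Or.inl ht) (Or.inl h0)
  have e3 : (1 : ENNReal) + t / (t + 1) = (1 + 2 * t) / (t + 1) := by
    rw [one_add_div t (t + 1) h1t (Or.inl (by simp))]
    congr 1; ring
  have e4 : (1 : ENNReal) + (1 + 2 * t)⁻¹ = (2 + 2 * t) / (1 + 2 * t) := by
    rw [← one_div, one_add_div 1 (1 + 2 * t) h2t (Or.inl (by simp))]
    congr 1; ring
  rw [e1, e2, e3, e4, ENNReal.inv_div (Or.inl h2t) (Or.inl (by simp)),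
    div_eq_mul_inv, div_eq_mul_inv, div_eq_mul_inv, mul_assoc,
    ← ENNReal.mul_inv (Or.inr ENNReal.ofNat_ne_top) (Or.inl h1t)]
  congr 1
  ring

lemma id2 (t : ENNReal) : 2 * (1 + (1 + t)⁻¹)⁻¹ = 1 + (1 + (t / 2)⁻¹)⁻¹ := by
  have := id4 (t / 2)
  rw [ENNReal.mul_div_cancel two_ne_zero ENNReal.ofNat_ne_top] at this
  rw [← this, ENNReal.mul_div_cancel two_ne_zero ENNReal.ofNat_ne_top]

lemma id3 (t : ENNReal) : (1 + t⁻¹)⁻¹ / 2 = (1 + ((1 + (t / 2)⁻¹)⁻¹)⁻¹)⁻¹ := by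
  have h := id1 (t / 2)
  rw [ENNReal.mul_div_cancel two_ne_zero ENNReal.ofNat_ne_top] at h
  rw [← h, mul_comm, div_eq_mul_inv, mul_assoc,
    ENNReal.mul_inv_cancel two_ne_zero ENNReal.ofNat_ne_top, mul_one]

lemma id5 (t : ENNReal) : (1 + (1 + t)) / 2 = 1 + t / 2 := by
  rw [show (1 : ENNReal) + (1 + t) = 2 + t by ring, ENNReal.add_div,
    ENNReal.div_self two_ne_zero ENNReal.ofNat_ne_top]

lemma id6 (t : ENNReal) : 2 * (1 + t) = 1 + (1 + 2 * t) := by ring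

end PD2

namespace PD3
open PD PD2

lemma g_append (u v : List Bool) (x : ENNReal) : g (u ++ v) x = g u (g v x) := by
  induction u with
  | nil => rfl
  | cons b u ih => cases b <;> simp [g, ih]

@[simp] lemma Mf_a (w : List Bool) : M (false :: w) 0 0 = M w 0 0 := by rw [M_false]; simp
@[simp] lemma Mf_b (w : List Bool) : M (false :: w) 0 1 = M w 0 1 := by rw [M_false]; simp
@[simp] lemma Mf_c (w : List Bool) : M (false :: w) 1 0 = M w 0 0 + M w 1 0 := by
  rw [M_false]; simp
@[simp] lemma Mf_d (w : List Bool) : M (false :: w) 1 1 = M w 0 1 + M w 1 1 := by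
  rw [M_false]; simp
@[simp] lemma Mt_a (w : List Bool) : M (true :: w) 0 0 = M w 0 0 + M w 1 0 := by
  rw [M_true]; simp
@[simp] lemma Mt_b (w : List Bool) : M (true :: w) 0 1 = M w 0 1 + M w 1 1 := by
  rw [M_true]; simp
@[simp] lemma Mt_c (w : List Bool) : M (true :: w) 1 0 = M w 1 0 := by rw [M_true]; simp
@[simp] lemma Mt_d (w : List Bool) : M (true :: w) 1 1 = M w 1 1 := by rw [M_true]; simp

lemma inv_helper (p q : ENNReal) (hp : p ≠ ⊤) (hq : q ≠ ⊤) (h : p ≠ 0 ∨ q ≠ 0) :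
    (1 + (p / q)⁻¹)⁻¹ = p / (p + q) := by
  rcases eq_or_ne p 0 with rfl | hp0
  · have hq0 : q ≠ 0 := h.resolve_left (by simp)
    simp [ENNReal.zero_div, hq0]
  · rw [ENNReal.inv_div (Or.inl hq) (Or.inr hp0), one_add_div q p hp (Or.inl hp0),
      ENNReal.inv_div (Or.inl hp) (Or.inl hp0)]

lemma g_zero (w : List Bool) : g w 0 = (M w 0 1 : ENNReal) / (M w 1 1 : ℕ) := by
  induction w with
  | nil =>
    show (0 : ENNReal) = ((1 : Matrix (Fin 2) (Fin 2) ℕ) 0 1 : ENNReal) / ((1 : Matrix (Fin 2) (Fin 2) ℕ) 1 1 : ℕ)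
    simp [Matrix.one_apply]
  | cons b w ih =>
    have hd := Md_pos w
    cases b
    · show (1 + (g w 0)⁻¹)⁻¹ = _
      rw [ih, inv_helper _ _ (by simp) (by simp) (Or.inr (by exact_mod_cast hd.ne'))]
      simp only [Mf_b, Mf_d, Nat.cast_add]
    · show 1 + g w 0 = _
      rw [ih, one_add_div _ _ (by simp) (Or.inl (by exact_mod_cast hd.ne'))]
      simp only [Mt_b, Mt_d]
      congr 1
      push_cast
      ring

lemma g_top (w : List Bool) : g w ⊤ = (M w 0 0 : ENNReal) / (M w 1 0 : ℕ) := by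
  induction w with
  | nil =>
    show (⊤ : ENNReal) = ((1 : Matrix (Fin 2) (Fin 2) ℕ) 0 0 : ENNReal) / ((1 : Matrix (Fin 2) (Fin 2) ℕ) 1 0 : ℕ)
    simp [Matrix.one_apply]
  | cons b w ih =>
    have ha := Ma_pos w
    cases b
    · show (1 + (g w ⊤)⁻¹)⁻¹ = _
      rw [ih, inv_helper _ _ (by simp) (by simp) (Or.inl (by exact_mod_cast ha.ne'))]
      simp only [Mf_a, Mf_c, Nat.cast_add]
    · show 1 + g w ⊤ = _
      rw [ih, one_add_div _ _ (by simp) (Or.inr (by exact_mod_cast ha.ne'))]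
      simp only [Mt_a, Mt_c]
      congr 1
      push_cast
      ring

lemma width (w : List Bool) (hc : 0 < M w 1 0) :
    g w ⊤ ≤ g w 0 + ((M w 1 0 * M w 1 1 : ℕ) : ENNReal)⁻¹ := by
  have hd := Md_pos w
  rw [g_top, g_zero]
  set a := M w 0 0
  set b := M w 0 1
  set c := M w 1 0
  set d := M w 1 1
  have hcE : (c : ENNReal) ≠ 0 := by exact_mod_cast hc.ne'
  have hdE : (d : ENNReal) ≠ 0 := by exact_mod_cast hd.ne'
  have key : (a : ENNReal) / c = (b : ENNReal) / d + ((c * d : ℕ) : ENNReal)⁻¹ := by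
    have e1 : (a : ENNReal) / c = ((a * d : ℕ) : ENNReal) / ((c * d : ℕ) : ENNReal) := by
      push_cast
      rw [ENNReal.mul_div_mul_right _ _ hdE (by simp)]
    have e2 : ((a * d : ℕ) : ENNReal) = ((b * c + 1 : ℕ) : ENNReal) := by
      exact_mod_cast congrArg (Nat.cast (R := ENNReal)) (M_det w)
    rw [e1, e2]
    push_cast
    rw [ENNReal.add_div]
    congr 1
    · rw [show (b : ENNReal) * c = c * b by ring, show (c : ENNReal) * d = c * d by ring,
        ENNReal.mul_div_mul_left _ _ hcE (by simp)]
    · rw [one_div]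
  exact le_of_eq key

lemma c_pos (w : List Bool) (h : false ∈ w) : 0 < M w 1 0 := by
  induction w with
  | nil => simp at h
  | cons b w ih =>
    cases b
    · have := Ma_pos w
      simp only [Mf_c]
      omega
    · have := ih (by simpa using h)
      simpa only [Mt_c] using this

lemma sum_ge (w : List Bool) :
    w.length + 2 ≤ M w 0 0 + M w 0 1 + M w 1 0 + M w 1 1 := by
  induction w with
  | nil => simp [M_nil, Matrix.one_apply]
  | cons b w ih =>
    have ha := Ma_pos w
    have hd := Md_pos w
    cases b
    · simp only [Mf_a, Mf_b, Mf_c, Mf_d, List.length_cons]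
      omega
    · simp only [Mt_a, Mt_b, Mt_c, Mt_d, List.length_cons]
      omega

lemma cd_big (u v : List Bool) (hu : false ∈ u) :
    v.length + 2 ≤ 2 * (M (u ++ v) 1 0 * M (u ++ v) 1 1) := by
  have hcu := c_pos u hu
  have hdu := Md_pos u
  have hav := Ma_pos v
  have hdv := Md_pos v
  have hs := sum_ge v
  have hc : M (u ++ v) 1 0 = M u 1 0 * M v 0 0 + M u 1 1 * M v 1 0 := by
    rw [M_append, Matrix.mul_apply, Fin.sum_univ_two]
  have hd : M (u ++ v) 1 1 = M u 1 0 * M v 0 1 + M u 1 1 * M v 1 1 := by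
    rw [M_append, Matrix.mul_apply, Fin.sum_univ_two]
  rw [hc, hd]
  set a := M v 0 0; set b := M v 0 1; set c := M v 1 0; set d := M v 1 1
  set p := M u 1 0; set q := M u 1 1
  have h1 : a + c ≤ p * a + q * c := by nlinarith
  have h2 : b + d ≤ p * b + q * d := by nlinarith
  have h3 : a + b + c + d ≤ 2 * ((a + c) * (b + d)) := by nlinarith
  calc v.length + 2 ≤ a + b + c + d := hs
    _ ≤ 2 * ((a + c) * (b + d)) := h3
    _ ≤ 2 * ((p * a + q * c) * (p * b + q * d)) := by
        exact Nat.mul_le_mul_left 2 (Nat.mul_le_mul h1 h2)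

lemma g_lt_top (w : List Bool) (h : false ∈ w) : g w ⊤ < ⊤ := by
  induction w with
  | nil => simp at h
  | cons b w ih =>
    cases b
    · show (1 + (g w ⊤)⁻¹)⁻¹ < ⊤
      exact lt_of_le_of_lt (ENNReal.inv_le_one.mpr le_self_add) ENNReal.one_lt_top
    · show 1 + g w ⊤ < ⊤
      exact ENNReal.add_lt_top.mpr ⟨ENNReal.one_lt_top, ih (by simpa using h)⟩

lemma take_of_append (w : List Bool) (s ξ' : Stream' Bool)
    (h : s = Stream'.appendStream' w ξ') : Stream'.take w.length s = w := by
  subst h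
  induction w with
  | nil => rfl
  | cons b w ih => rw [Stream'.cons_append_stream]; simpa using ih

end PD3

/-- φ(y(ξ)) = 2·φ(ξ). -/
theorem phi_doubling
    (φ : Stream' Bool → ENNReal)
    (hφ0 : ∀ ξ, φ (Stream'.cons false ξ) = (1 + (φ ξ)⁻¹)⁻¹)
    (hφ1 : ∀ ξ, φ (Stream'.cons true ξ) = 1 + φ ξ)
    (y z : Stream' Bool → Stream' Bool)
    (hy00 : ∀ η, y (Stream'.cons false (Stream'.cons false η)) =
      Stream'.cons false (y η))
    (hy01 : ∀ η, y (Stream'.cons false (Stream'.cons true η)) =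
      Stream'.cons true (Stream'.cons false (z η)))
    (hy1 : ∀ η, y (Stream'.cons true η) =
      Stream'.cons true (Stream'.cons true (y η)))
    (hz0 : ∀ η, z (Stream'.cons false η) =
      Stream'.cons false (Stream'.cons false (z η)))
    (hz10 : ∀ η, z (Stream'.cons true (Stream'.cons false η)) =
      Stream'.cons false (Stream'.cons true (y η)))
    (hz11 : ∀ η, z (Stream'.cons true (Stream'.cons true η)) =
      Stream'.cons true (z η)) :
    ∀ ξ : Stream' Bool, φ (y ξ) = 2 * φ ξ := by
  classical
  have gphi : ∀ (w : List Bool) (s : Stream' Bool),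
      φ (Stream'.appendStream' w s) = PD.g w (φ s) := by
    intro w
    induction w with
    | nil => intro s; rfl
    | cons b w ih =>
      intro s
      cases b
      · rw [Stream'.cons_append_stream, hφ0, ih]; rfl
      · rw [Stream'.cons_append_stream, hφ1, ih]; rfl
  have split1 : ∀ s : Stream' Bool, s = Stream'.cons s.head s.tail :=
    fun s => (Stream'.eta s).symm
  have split2 : ∀ s : Stream' Bool,
      s = Stream'.cons s.head (Stream'.cons s.tail.head s.tail.tail) := by
    intro s
    conv_lhs => rw [← Stream'.eta s, ← Stream'.eta s.tail]
  have hmono : ∀ {x x' : ENNReal}, x ≤ x' → (1 + x⁻¹)⁻¹ ≤ (1 + x'⁻¹)⁻¹ :=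
    fun h => ENNReal.inv_le_inv.mpr (add_le_add_right (ENNReal.inv_le_inv.mpr h) 1)
  have hmono2 : ∀ {x x' : ENNReal}, x ≤ x' → (1 + (1 + x)⁻¹)⁻¹ ≤ (1 + (1 + x')⁻¹)⁻¹ :=
    fun h => ENNReal.inv_le_inv.mpr (add_le_add_right
      (ENNReal.inv_le_inv.mpr (add_le_add_right h 1)) 1)
  -- main interval approximation
  have key : ∀ n : ℕ,
      (∀ ξ, ∃ w ξ', y ξ = Stream'.appendStream' w ξ' ∧ n ≤ w.length ∧
        PD.g w 0 ≤ 2 * φ ξ ∧ 2 * φ ξ ≤ PD.g w ⊤) ∧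
      (∀ ξ, ∃ w ξ', z ξ = Stream'.appendStream' w ξ' ∧ n ≤ w.length ∧
        PD.g w 0 ≤ φ ξ / 2 ∧ φ ξ / 2 ≤ PD.g w ⊤) := by
    intro n
    induction n with
    | zero =>
      constructor <;> intro ξ
      · exact ⟨[], y ξ, (Stream'.nil_append_stream _).symm, le_rfl, zero_le, le_top⟩
      · exact ⟨[], z ξ, (Stream'.nil_append_stream _).symm, le_rfl, zero_le, le_top⟩
    | succ n ih =>
      obtain ⟨ihP, ihQ⟩ := ih
      constructor
      · intro ξ
        cases h0 : ξ.head
        · cases h1 : ξ.tail.head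
          · -- ξ = 00η
            set η := ξ.tail.tail with hη
            have hξ := split2 ξ
            rw [h0, h1, ← hη] at hξ
            obtain ⟨w, ξ', hw, hlen, hl, hu⟩ := ihP η
            have hident : 2 * φ ξ = (1 + (2 * φ η)⁻¹)⁻¹ := by
              rw [hξ, hφ0, hφ0]; exact PD2.id1 (φ η)
            refine ⟨false :: w, ξ', ?_, ?_, ?_, ?_⟩
            · rw [hξ, hy00, hw, Stream'.cons_append_stream]
            · simp only [List.length_cons]; omega
            · rw [hident]
              show (1 + (PD.g w 0)⁻¹)⁻¹ ≤ _
              exact hmono hl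
            · rw [hident]
              show _ ≤ (1 + (PD.g w ⊤)⁻¹)⁻¹
              exact hmono hu
          · -- ξ = 01η
            set η := ξ.tail.tail with hη
            have hξ := split2 ξ
            rw [h0, h1, ← hη] at hξ
            obtain ⟨w, ξ', hw, hlen, hl, hu⟩ := ihQ η
            have hident : 2 * φ ξ = 1 + (1 + (φ η / 2)⁻¹)⁻¹ := by
              rw [hξ, hφ0, hφ1]; exact PD2.id2 (φ η)
            refine ⟨true :: false :: w, ξ', ?_, ?_, ?_, ?_⟩
            · rw [hξ, hy01, hw, Stream'.cons_append_stream, Stream'.cons_append_stream]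
            · simp only [List.length_cons]; omega
            · rw [hident]
              show 1 + (1 + (PD.g w 0)⁻¹)⁻¹ ≤ _
              exact add_le_add_right (hmono hl) 1
            · rw [hident]
              show _ ≤ 1 + (1 + (PD.g w ⊤)⁻¹)⁻¹
              exact add_le_add_right (hmono hu) 1
        · -- ξ = 1η
          set η := ξ.tail with hη
          have hξ := split1 ξ
          rw [h0, ← hη] at hξ
          obtain ⟨w, ξ', hw, hlen, hl, hu⟩ := ihP η
          have hident : 2 * φ ξ = 1 + (1 + 2 * φ η) := by
            rw [hξ, hφ1]; exact PD2.id6 (φ η)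
          refine ⟨true :: true :: w, ξ', ?_, ?_, ?_, ?_⟩
          · rw [hξ, hy1, hw, Stream'.cons_append_stream, Stream'.cons_append_stream]
          · simp only [List.length_cons]; omega
          · rw [hident]
            show 1 + (1 + PD.g w 0) ≤ _
            exact add_le_add_right (add_le_add_right hl 1) 1
          · rw [hident]
            show _ ≤ 1 + (1 + PD.g w ⊤)
            exact add_le_add_right (add_le_add_right hu 1) 1
      · intro ξ
        cases h0 : ξ.head
        · -- ξ = 0η
          set η := ξ.tail with hη
          have hξ := split1 ξ
          rw [h0, ← hη] at hξ
          obtain ⟨w, ξ', hw, hlen, hl, hu⟩ := ihQ η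
          have hident : φ ξ / 2 = (1 + ((1 + (φ η / 2)⁻¹)⁻¹)⁻¹)⁻¹ := by
            rw [hξ, hφ0]; exact PD2.id3 (φ η)
          refine ⟨false :: false :: w, ξ', ?_, ?_, ?_, ?_⟩
          · rw [hξ, hz0, hw, Stream'.cons_append_stream, Stream'.cons_append_stream]
          · simp only [List.length_cons]; omega
          · rw [hident]
            show (1 + ((1 + (PD.g w 0)⁻¹)⁻¹)⁻¹)⁻¹ ≤ _
            exact hmono (hmono hl)
          · rw [hident]
            show _ ≤ (1 + ((1 + (PD.g w ⊤)⁻¹)⁻¹)⁻¹)⁻¹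
            exact hmono (hmono hu)
        · cases h1 : ξ.tail.head
          · -- ξ = 10η
            set η := ξ.tail.tail with hη
            have hξ := split2 ξ
            rw [h0, h1, ← hη] at hξ
            obtain ⟨w, ξ', hw, hlen, hl, hu⟩ := ihP η
            have hident : φ ξ / 2 = (1 + (1 + 2 * φ η)⁻¹)⁻¹ := by
              rw [hξ, hφ1, hφ0]; exact PD2.id4 (φ η)
            refine ⟨false :: true :: w, ξ', ?_, ?_, ?_, ?_⟩
            · rw [hξ, hz10, hw, Stream'.cons_append_stream, Stream'.cons_append_stream]
            · simp only [List.length_cons]; omega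
            · rw [hident]
              show (1 + (1 + PD.g w 0)⁻¹)⁻¹ ≤ _
              exact hmono2 hl
            · rw [hident]
              show _ ≤ (1 + (1 + PD.g w ⊤)⁻¹)⁻¹
              exact hmono2 hu
          · -- ξ = 11η
            set η := ξ.tail.tail with hη
            have hξ := split2 ξ
            rw [h0, h1, ← hη] at hξ
            obtain ⟨w, ξ', hw, hlen, hl, hu⟩ := ihQ η
            have hident : φ ξ / 2 = 1 + φ η / 2 := by
              rw [hξ, hφ1, hφ1]; exact PD2.id5 (φ η)
            refine ⟨true :: w, ξ', ?_, ?_, ?_, ?_⟩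
            · rw [hξ, hz11, hw, Stream'.cons_append_stream]
            · simp only [List.length_cons]; omega
            · rw [hident]
              show 1 + PD.g w 0 ≤ _
              exact add_le_add_right hl 1
            · rw [hident]
              show _ ≤ 1 + PD.g w ⊤
              exact add_le_add_right hu 1
  -- the all-true case
  have phi_top : ∀ s : Stream' Bool, (∀ k, s.get k = true) → φ s = ⊤ := by
    have hle : ∀ (n : ℕ) (s : Stream' Bool), (∀ k, s.get k = true) → (n : ENNReal) ≤ φ s := by
      intro n
      induction n with
      | zero => intro s _; simp
      | succ n ihn =>
        intro s hs
        have h1 : s = Stream'.cons true s.tail := by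
          have h := split1 s; rwa [show s.head = true from hs 0] at h
        rw [h1, hφ1]
        have ht : (n : ENNReal) ≤ φ s.tail := ihn s.tail (fun k => by
          have := hs (k + 1); rwa [Stream'.get_succ] at this)
        calc ((n + 1 : ℕ) : ENNReal) = 1 + n := by push_cast; ring
          _ ≤ 1 + φ s.tail := add_le_add_right ht 1
    intro s hs
    by_contra hne
    obtain ⟨m, hm⟩ := ENNReal.exists_nat_gt hne
    exact absurd (hle m s hs) (not_le.mpr hm)
  have ytrue : ∀ (k : ℕ) (s : Stream' Bool), (∀ i, s.get i = true) → (y s).get k = true := by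
    intro k
    induction k using Nat.strong_induction_on with
    | _ k ihk =>
      intro s hs
      have h1 : s = Stream'.cons true s.tail := by
        have h := split1 s; rwa [show s.head = true from hs 0] at h
      have hy : y s = Stream'.cons true (Stream'.cons true (y s.tail)) := by
        rw [h1] ; exact hy1 s.tail
      rw [hy]
      rcases k with _ | _ | m
      · exact Stream'.get_zero_cons true _
      · rw [Stream'.get_succ, Stream'.tail_cons]
        exact Stream'.get_zero_cons true _
      · rw [Stream'.get_succ, Stream'.tail_cons, Stream'.get_succ, Stream'.tail_cons]
        exact ihk m (by omega) s.tail (fun i => by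
          have := hs (i + 1); rwa [Stream'.get_succ] at this)
  have yfalse : ∀ (k : ℕ) (s : Stream' Bool), s.get k = false →
      ∃ m, (y s).get m = false := by
    intro k
    induction k using Nat.strong_induction_on with
    | _ k ihk =>
      intro s hk
      cases h0 : s.head
      · cases h1 : s.tail.head
        · have hξ := split2 s; rw [h0, h1] at hξ
          refine ⟨0, ?_⟩
          rw [hξ, hy00]
          exact Stream'.get_zero_cons false _
        · have hξ := split2 s; rw [h0, h1] at hξ
          refine ⟨1, ?_⟩
          rw [hξ, hy01, Stream'.get_succ, Stream'.tail_cons]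
          exact Stream'.get_zero_cons false _
      · have hξ := split1 s; rw [h0] at hξ
        rcases k with _ | k
        · exfalso
          have : s.get 0 = true := by rw [hξ]; exact Stream'.get_zero_cons true _
          rw [hk] at this; exact Bool.false_ne_true this
        · have hk' : s.tail.get k = false := by rwa [Stream'.get_succ] at hk
          obtain ⟨m, hm⟩ := ihk k (Nat.lt_succ_self k) s.tail hk'
          refine ⟨m + 2, ?_⟩
          rw [hξ, hy1, Stream'.get_succ, Stream'.tail_cons, Stream'.get_succ,
            Stream'.tail_cons]
          exact hm
  intro ξ
  by_cases hall : ∀ k, ξ.get k = true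
  · rw [phi_top ξ hall, phi_top (y ξ) (fun k => ytrue k ξ hall),
      ENNReal.mul_top two_ne_zero]
  · push_neg at hall
    obtain ⟨k, hk⟩ := hall
    replace hk : ξ.get k = false := by simpa using hk
    obtain ⟨k0, hk0⟩ := yfalse k ξ hk
    have hfin : ∀ (s : Stream' Bool) (j : ℕ), s.get j = false → φ s < ⊤ := by
      intro s j hj
      have hmem : false ∈ Stream'.take (j + 1) s :=
        List.mem_of_getElem? (by rw [Stream'.getElem?_take (Nat.lt_succ_self j), hj])
      calc φ s = PD.g (Stream'.take (j + 1) s) (φ (Stream'.drop (j + 1) s)) := by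
            conv_lhs => rw [← Stream'.append_take_drop (j + 1) s]
            exact gphi _ _
        _ ≤ PD.g (Stream'.take (j + 1) s) ⊤ := PD.g_mono _ le_top
        _ < ⊤ := PD3.g_lt_top _ hmem
    have main : ∀ ε : NNReal, 0 < ε →
        (φ (y ξ) ≤ 2 * φ ξ + ε ∧ 2 * φ ξ ≤ φ (y ξ) + ε) := by
      intro ε hε
      have hεne : ((ε : ENNReal))⁻¹ ≠ ⊤ :=
        ENNReal.inv_ne_top.mpr (by exact_mod_cast hε.ne')
      obtain ⟨m, hm⟩ := ENNReal.exists_nat_gt hεne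
      obtain ⟨w, ξ', hw, hlen, hl, hu⟩ := (key (2 * m + (k0 + 1))).1 ξ
      have hwtake : Stream'.take w.length (y ξ) = w := PD3.take_of_append w _ _ hw
      have hk0w : k0 < w.length := by omega
      have hw0 : w[k0]? = some false := by
        rw [← hwtake, Stream'.getElem?_take hk0w, hk0]
      have hmem : false ∈ w := List.mem_of_getElem? hw0
      have hmemu : false ∈ w.take (k0 + 1) :=
        List.mem_of_getElem? (by rw [List.getElem?_take_of_lt (Nat.lt_succ_self k0), hw0])
      have hcd := PD3.cd_big (w.take (k0 + 1)) (w.drop (k0 + 1)) hmemu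
      rw [List.take_append_drop] at hcd
      have hvlen : 2 * m ≤ (w.drop (k0 + 1)).length := by
        rw [List.length_drop]; omega
      set cd := PD.M w 1 0 * PD.M w 1 1 with hcddef
      have hcdm : m ≤ cd := by omega
      have hwidth := PD3.width w (PD3.c_pos w hmem)
      rw [← hcddef] at hwidth
      have hinv : ((cd : ℕ) : ENNReal)⁻¹ ≤ (ε : ENNReal) := by
        have h1 : ((ε : ENNReal))⁻¹ ≤ (cd : ENNReal) :=
          le_trans hm.le (by exact_mod_cast Nat.cast_le.mpr hcdm)
        calc ((cd : ℕ) : ENNReal)⁻¹ ≤ (((ε : ENNReal))⁻¹)⁻¹ := ENNReal.inv_le_inv.mpr h1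
          _ = (ε : ENNReal) := inv_inv _
      have hgyl : PD.g w 0 ≤ φ (y ξ) := by
        rw [hw, gphi]; exact PD.g_mono w (zero_le)
      have hgyu : φ (y ξ) ≤ PD.g w ⊤ := by
        rw [hw, gphi]; exact PD.g_mono w le_top
      constructor
      · calc φ (y ξ) ≤ PD.g w ⊤ := hgyu
          _ ≤ PD.g w 0 + ((cd : ℕ) : ENNReal)⁻¹ := hwidth
          _ ≤ 2 * φ ξ + ε := add_le_add hl hinv
      · calc 2 * φ ξ ≤ PD.g w ⊤ := hu
          _ ≤ PD.g w 0 + ((cd : ℕ) : ENNReal)⁻¹ := hwidth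
          _ ≤ φ (y ξ) + ε := add_le_add hgyl hinv
    apply le_antisymm
    · exact ENNReal.le_of_forall_pos_le_add (fun ε hε _ => (main ε hε).1)
    · exact ENNReal.le_of_forall_pos_le_add (fun ε hε _ => (main ε hε).2)
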